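/- Let D ⊆ ℝ and suppose f_0, f_1, …, f_m are monotone real-valued functions defined on D, i.e. each f_k is either strictly increasing or strictly decreasing on D. Let G = {(f_0(x), f_1(x), …, f_m(x)) : x ∈ D} ⊆ ℝ^{m+1} (Euclidean space). Then H^1(G) ≤ Σ_{k=0}^m H^1(f_k(D)). -/

import Mathlib

open MeasureTheory Set
open scoped ENNReal NNReal

namespace Stmt7Aux

/-- `P` is an order-convex subset of `D`. -/
def OrdConvexIn (D P : Set ℝ) : Prop :=
  P ⊆ D ∧ ∀ ⦃x⦄, x ∈ P → ∀ ⦃y⦄, y ∈ P → ∀ ⦃z⦄, z ∈ D → x ≤ z → z ≤ y → z ∈ P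

lemma ordered_of_disjoint {D P Q : Set ℝ} (hP : OrdConvexIn D P) (hQ : OrdConvexIn D Q)
    (h : Disjoint P Q) :
    (∀ p ∈ P, ∀ q ∈ Q, p < q) ∨ (∀ p ∈ P, ∀ q ∈ Q, q < p) := by
  by_contra hc
  push_neg at hc
  obtain ⟨⟨p₁, hp₁, q₁, hq₁, h1⟩, ⟨p₂, hp₂, q₂, hq₂, h2⟩⟩ := hc
  by_cases hcase : q₂ ≤ p₁
  · exact Set.disjoint_left.mp h (hP.2 hp₂ hp₁ (hQ.1 hq₂) h2 hcase) hq₂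
  · push_neg at hcase
    exact Set.disjoint_left.mp h hp₁ (hQ.2 hq₁ hq₂ (hP.1 hp₁) h1 hcase.le)

lemma ordConnected_ordConnectedComponent {s : Set ℝ} {x : ℝ} :
    (s.ordConnectedComponent x).OrdConnected := by
  constructor
  intro y hy z hz t ht
  rw [Set.mem_ordConnectedComponent]
  have h1 : uIcc x t ⊆ uIcc x y ∪ uIcc y t := uIcc_subset_uIcc_union_uIcc
  have h2 : uIcc y t ⊆ uIcc y z :=
    Set.ordConnected_uIcc.uIcc_subset left_mem_uIcc (Icc_subset_uIcc ht)
  have h3 : uIcc y z ⊆ uIcc y x ∪ uIcc x z := uIcc_subset_uIcc_union_uIcc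
  intro a ha
  rcases h1 ha with h | h
  · exact hy h
  · rcases h3 (h2 h) with h' | h'
    · exact hy (by rwa [uIcc_comm] at h')
    · exact hz h'

lemma isOpen_ordConnectedComponent {U : Set ℝ} (hU : IsOpen U) {x : ℝ} :
    IsOpen (U.ordConnectedComponent x) := by
  rw [Metric.isOpen_iff]
  intro y hy
  obtain ⟨ε, hε, hball⟩ := Metric.isOpen_iff.mp hU y (Set.ordConnectedComponent_subset hy)
  refine ⟨ε, hε, fun z hz => ?_⟩
  rw [Set.mem_ordConnectedComponent]
  intro a ha
  rcases (uIcc_subset_uIcc_union_uIcc (b := y)) ha with h | h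
  · exact hy h
  · refine hball ?_
    have : uIcc y z ⊆ Metric.ball y ε := by
      rw [Real.ball_eq_Ioo]
      exact Set.ordConnected_Ioo.uIcc_subset (by rw [← Real.ball_eq_Ioo]; exact Metric.mem_ball_self hε)
        (by rw [← Real.ball_eq_Ioo]; exact hz)
    exact this h

lemma bdd_of_ordConnected {s : Set ℝ} (hs : s.OrdConnected) (h : volume s ≠ ⊤) :
    BddAbove s ∧ BddBelow s := by
  rcases s.eq_empty_or_nonempty with rfl | ⟨a, ha⟩
  · exact ⟨bddAbove_empty, bddBelow_empty⟩
  constructor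
  · by_contra hb
    rw [not_bddAbove_iff] at hb
    have : Ici a ⊆ s := by
      intro z hz
      obtain ⟨c, hc, hzc⟩ := hb z
      exact hs.out ha hc ⟨hz, hzc.le⟩
    exact h (top_le_iff.mp (Real.volume_Ici (a := a) ▸ measure_mono this))
  · by_contra hb
    rw [not_bddBelow_iff] at hb
    have : Iic a ⊆ s := by
      intro z hz
      obtain ⟨c, hc, hzc⟩ := hb z
      exact hs.out hc ha ⟨hzc.le, hz⟩
    exact h (top_le_iff.mp (Real.volume_Iic (a := a) ▸ measure_mono this))

/-- Any set of finite outer measure can be covered by countably many pairwise disjoint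
bounded order-connected measurable sets of controlled total measure. -/
lemma exists_disjoint_cover {A : Set ℝ} {r : ℝ≥0∞} (hr : r ≠ ⊤) (h : volume A < r) :
    ∃ T : ℕ → Set ℝ, (∀ n, (T n).OrdConnected) ∧ (∀ n, MeasurableSet (T n)) ∧
      Pairwise (Function.onFun Disjoint T) ∧ A ⊆ ⋃ n, T n ∧
      (∀ n, BddAbove (T n) ∧ BddBelow (T n)) ∧ ∑' n, volume (T n) ≤ r := by
  obtain ⟨U, hAU, hUo, hUr⟩ := Set.exists_isOpen_lt_of_lt A r h
  set e : ℕ → ℚ := fun n => (Denumerable.eqv ℚ).symm n with he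
  set C : ℕ → Set ℝ := fun n => U.ordConnectedComponent (e n) with hC
  set T : ℕ → Set ℝ := fun n => C n \ ⋃ m ∈ Finset.range n, C m with hT
  have hTsub : ∀ n, T n ⊆ C n := fun n => Set.diff_subset
  have hCU : ∀ n, C n ⊆ U := fun n => Set.ordConnectedComponent_subset
  have key : ∀ n, T n = ∅ ∨ T n = C n := by
    intro n
    by_cases hex : ∃ m < n, (C m ∩ C n).Nonempty
    · left
      obtain ⟨m, hm, z, hz1, hz2⟩ := hex
      have h1 : C m = U.ordConnectedComponent z := Set.ordConnectedComponent_eq hz1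
      have h2 : C n = U.ordConnectedComponent z := Set.ordConnectedComponent_eq hz2
      have : C n ⊆ ⋃ m ∈ Finset.range n, C m := by
        intro w hw
        exact Set.mem_biUnion (Finset.mem_range.mpr hm) (by rw [h1, ← h2]; exact hw)
      rw [hT]
      simp only [Set.diff_eq_empty]
      exact this
    · right
      push_neg at hex
      rw [hT]
      refine Set.eq_of_subset_of_subset Set.diff_subset fun w hw => ⟨hw, fun hcon => ?_⟩
      simp only [Set.mem_iUnion] at hcon
      obtain ⟨mm, hmm, hwm⟩ := hcon
      exact Set.eq_empty_iff_forall_notMem.mp (hex mm (Finset.mem_range.mp hmm)) w ⟨hwm, hw⟩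
  have hTo : ∀ n, (T n).OrdConnected := by
    intro n
    rcases key n with h' | h'
    · rw [h']; exact Set.ordConnected_empty
    · rw [h']; exact ordConnected_ordConnectedComponent
  have hTopen : ∀ n, IsOpen (T n) := by
    intro n
    rcases key n with h' | h'
    · rw [h']; exact isOpen_empty
    · rw [h']; exact isOpen_ordConnectedComponent hUo
  have hTm : ∀ n, MeasurableSet (T n) := fun n => (hTopen n).measurableSet
  have hTd : Pairwise (Function.onFun Disjoint T) := by
    have key2 : ∀ m n, m < n → Disjoint (T m) (T n) := by
      intro m n hmn
      rw [Set.disjoint_left]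
      intro w hwm hwn
      rw [hT] at hwn
      exact hwn.2 (Set.mem_biUnion (Finset.mem_range.mpr hmn) (hTsub m hwm))
    intro m n hmn
    rcases lt_or_gt_of_ne hmn with h' | h'
    · exact key2 m n h'
    · exact (key2 n m h').symm
  have hcover : A ⊆ ⋃ n, T n := by
    intro x hx
    have hxU : x ∈ U := hAU hx
    have hex : ∃ n, x ∈ C n := by
      obtain ⟨ε, hε, hball⟩ := Metric.isOpen_iff.mp hUo x hxU
      obtain ⟨q, hq1, hq2⟩ := exists_rat_btwn (show x - ε < x by linarith)
      obtain ⟨nq, hnq⟩ : ∃ n, e n = q := ⟨Denumerable.eqv ℚ q, by rw [he]; simp⟩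
      refine ⟨nq, ?_⟩
      have hqe : ((e nq : ℚ) : ℝ) = (q : ℝ) := by rw [hnq]
      rw [hC, Set.mem_ordConnectedComponent, hqe]
      have hqball : (q : ℝ) ∈ Metric.ball x ε := by
        rw [Real.ball_eq_Ioo]; exact ⟨hq1, hq2.trans (by linarith)⟩
      have : uIcc (q : ℝ) x ⊆ Metric.ball x ε := by
        rw [Real.ball_eq_Ioo]
        exact Set.ordConnected_Ioo.uIcc_subset (by rw [← Real.ball_eq_Ioo]; exact hqball)
          (by rw [← Real.ball_eq_Ioo]; exact Metric.mem_ball_self hε)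
      exact this.trans hball
    classical
    obtain ⟨n, hn, hmin⟩ : ∃ n, x ∈ C n ∧ ∀ m < n, x ∉ C m :=
      ⟨Nat.find hex, Nat.find_spec hex, fun m hm => Nat.find_min hex hm⟩
    refine Set.mem_iUnion.mpr ⟨n, ?_⟩
    rw [hT]
    refine ⟨hn, ?_⟩
    intro hcon
    simp only [Set.mem_iUnion] at hcon
    obtain ⟨m, hm, hxm⟩ := hcon
    exact hmin m (Finset.mem_range.mp hm) hxm
  have hTU : (⋃ n, T n) ⊆ U := Set.iUnion_subset fun n => (hTsub n).trans (hCU n)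
  have hsum : ∑' n, volume (T n) ≤ r := by
    rw [← measure_iUnion hTd hTm]
    exact (measure_mono hTU).trans hUr.le
  have hbdd : ∀ n, BddAbove (T n) ∧ BddBelow (T n) := by
    intro n
    apply bdd_of_ordConnected (hTo n)
    intro hcon
    have : volume (T n) ≤ r := le_trans (measure_mono ((hTsub n).trans (hCU n))) hUr.le
    rw [hcon] at this
    exact hr (top_le_iff.mp this)
  exact ⟨T, hTo, hTm, hTd, hcover, hbdd, hsum⟩

/-- Key one-dimensional lemma: the image of `D` under a sum of two monotone functions has
outer measure at most the sum of the outer measures of the images. -/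
lemma lemmaB {D : Set ℝ} {u v : ℝ → ℝ} (hu : MonotoneOn u D) (hv : MonotoneOn v D) :
    volume ((fun x => u x + v x) '' D) ≤ volume (u '' D) + volume (v '' D) := by
  apply ENNReal.le_of_forall_pos_le_add
  intro ε hε hfin
  have huf : volume (u '' D) ≠ ⊤ := (lt_of_le_of_lt le_self_add hfin).ne
  have hvf : volume (v '' D) ≠ ⊤ := (lt_of_le_of_lt le_add_self hfin).ne
  have hε2 : (ε : ℝ≥0∞) / 2 ≠ 0 := by
    simp [ENNReal.div_eq_zero_iff, hε.ne']
  have hru : volume (u '' D) < volume (u '' D) + ε / 2 := ENNReal.lt_add_right huf hε2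
  have hrv : volume (v '' D) < volume (v '' D) + ε / 2 := ENNReal.lt_add_right hvf hε2
  have hruT : volume (u '' D) + (ε : ℝ≥0∞) / 2 ≠ ⊤ := by
    apply ENNReal.add_ne_top.mpr
    exact ⟨huf, (ENNReal.div_lt_top ENNReal.coe_ne_top two_ne_zero).ne⟩
  have hrvT : volume (v '' D) + (ε : ℝ≥0∞) / 2 ≠ ⊤ := by
    apply ENNReal.add_ne_top.mpr
    exact ⟨hvf, (ENNReal.div_lt_top ENNReal.coe_ne_top two_ne_zero).ne⟩
  obtain ⟨T, hTo, hTm, hTd, hTc, hTb, hTs⟩ := exists_disjoint_cover hruT hru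
  obtain ⟨S, hSo, hSm, hSd, hSc, hSb, hSs⟩ := exists_disjoint_cover hrvT hrv
  set w : ℝ → ℝ := fun x => u x + v x with hw
  set P : ℕ × ℕ → Set ℝ := fun p => D ∩ u ⁻¹' T p.1 ∩ v ⁻¹' S p.2 with hP
  -- order convexity of pieces
  have hPconv : ∀ p, OrdConvexIn D (P p) := by
    intro p
    refine ⟨fun x hx => hx.1.1, ?_⟩
    intro x hx y hy z hz hxz hzy
    refine ⟨⟨hz, ?_⟩, ?_⟩
    · exact (hTo p.1).out hx.1.2 hy.1.2 ⟨hu hx.1.1 hz hxz, hu hz hy.1.1 hzy⟩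
    · exact (hSo p.2).out hx.2 hy.2 ⟨hv hx.1.1 hz hxz, hv hz hy.1.1 hzy⟩
  have hPdisj : ∀ p q, p ≠ q → Disjoint (P p) (P q) := by
    intro p q hpq
    rcases Prod.ext_iff.not.mp hpq |> not_and_or.mp with h1 | h1
    · exact Set.disjoint_left.mpr fun x hx hx' =>
        Set.disjoint_left.mp (hTd h1) hx.1.2 hx'.1.2
    · exact Set.disjoint_left.mpr fun x hx hx' =>
        Set.disjoint_left.mp (hSd h1) hx.2 hx'.2
  set Iu : ℕ × ℕ → Set ℝ := fun p => Ioo (sInf (u '' P p)) (sSup (u '' P p)) with hIu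
  set Iv : ℕ × ℕ → Set ℝ := fun p => Ioo (sInf (v '' P p)) (sSup (v '' P p)) with hIv
  -- basic facts about nonempty pieces
  have huPsub : ∀ p, u '' P p ⊆ T p.1 := by
    rintro p _ ⟨x, hx, rfl⟩; exact hx.1.2
  have hvPsub : ∀ p, v '' P p ⊆ S p.2 := by
    rintro p _ ⟨x, hx, rfl⟩; exact hx.2
  have huBdd : ∀ p, BddAbove (u '' P p) ∧ BddBelow (u '' P p) :=
    fun p => ⟨(hTb p.1).1.mono (huPsub p), (hTb p.1).2.mono (huPsub p)⟩
  have hvBdd : ∀ p, BddAbove (v '' P p) ∧ BddBelow (v '' P p) :=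
    fun p => ⟨(hSb p.2).1.mono (hvPsub p), (hSb p.2).2.mono (hvPsub p)⟩
  have hIuT : ∀ p, Iu p ⊆ T p.1 := by
    intro p z hz
    rcases (P p).eq_empty_or_nonempty with hemp | hne
    · exfalso
      rw [hIu] at hz
      simp only [hemp, Set.image_empty, Real.sInf_empty, Real.sSup_empty] at hz
      exact absurd hz (by simp)
    · have hne' : (u '' P p).Nonempty := hne.image u
      obtain ⟨a, ha, haz⟩ := (csInf_lt_iff (huBdd p).2 hne').mp hz.1
      obtain ⟨b, hb, hzb⟩ := (lt_csSup_iff (huBdd p).1 hne').mp hz.2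
      exact (hTo p.1).out (huPsub p ha) (huPsub p hb) ⟨haz.le, hzb.le⟩
  have hIvS : ∀ p, Iv p ⊆ S p.2 := by
    intro p z hz
    rcases (P p).eq_empty_or_nonempty with hemp | hne
    · exfalso
      rw [hIv] at hz
      simp only [hemp, Set.image_empty, Real.sInf_empty, Real.sSup_empty] at hz
      exact absurd hz (by simp)
    · have hne' : (v '' P p).Nonempty := hne.image v
      obtain ⟨a, ha, haz⟩ := (csInf_lt_iff (hvBdd p).2 hne').mp hz.1
      obtain ⟨b, hb, hzb⟩ := (lt_csSup_iff (hvBdd p).1 hne').mp hz.2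
      exact (hSo p.2).out (hvPsub p ha) (hvPsub p hb) ⟨haz.le, hzb.le⟩
  -- disjointness of the hull families
  have hullDisj : ∀ (g : ℝ → ℝ), MonotoneOn g D →
      (∀ p, BddAbove (g '' P p) ∧ BddBelow (g '' P p)) →
      Pairwise (Function.onFun Disjoint fun p => Ioo (sInf (g '' P p)) (sSup (g '' P p))) := by
    intro g hg hgB p q hpq
    rcases (P p).eq_empty_or_nonempty with hemp | hnep
    · simp [Function.onFun, hemp]
    rcases (P q).eq_empty_or_nonempty with hemq | hneq
    · simp [Function.onFun, hemq]
    have hord := ordered_of_disjoint (hPconv p) (hPconv q) (hPdisj p q hpq)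
    have main : ∀ (p q : ℕ × ℕ), (P p).Nonempty → (P q).Nonempty →
        (∀ a ∈ P p, ∀ b ∈ P q, a < b) →
        Disjoint (Ioo (sInf (g '' P p)) (sSup (g '' P p)))
          (Ioo (sInf (g '' P q)) (sSup (g '' P q))) := by
      intro p q hnep hneq hlt
      have hle : sSup (g '' P p) ≤ sInf (g '' P q) := by
        apply csSup_le (hnep.image g)
        rintro _ ⟨a, ha, rfl⟩
        apply le_csInf (hneq.image g)
        rintro _ ⟨b, hb, rfl⟩
        exact hg ((hPconv p).1 ha) ((hPconv q).1 hb) (hlt a ha b hb).le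
      rw [Set.disjoint_left]
      rintro z ⟨_, hz2⟩ ⟨hz3, _⟩
      exact absurd (hz2.trans_le (hle.trans hz3.le)) (lt_irrefl z)
    rcases hord with h' | h'
    · exact main p q hnep hneq h'
    · exact (main q p hneq hnep fun a ha b hb => h' b hb a ha).symm
  have hIud : Pairwise (Function.onFun Disjoint Iu) := hullDisj u hu huBdd
  have hIvd : Pairwise (Function.onFun Disjoint Iv) := hullDisj v hv hvBdd
  -- covering of w '' D
  have hcover : w '' D ⊆ ⋃ p, w '' P p := by
    rintro _ ⟨x, hx, rfl⟩
    obtain ⟨n, hn⟩ := Set.mem_iUnion.mp (hTc (Set.mem_image_of_mem u hx))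
    obtain ⟨k, hk⟩ := Set.mem_iUnion.mp (hSc (Set.mem_image_of_mem v hx))
    exact Set.mem_iUnion.mpr ⟨(n, k), Set.mem_image_of_mem w ⟨⟨hx, hn⟩, hk⟩⟩
  -- per-piece estimate
  have hpiece : ∀ p, volume (w '' P p) ≤ volume (Iu p) + volume (Iv p) := by
    intro p
    rcases (P p).eq_empty_or_nonempty with hemp | hne
    · simp [hemp]
    have hneu := hne.image u
    have hnev := hne.image v
    have hsub : w '' P p ⊆
        Icc (sInf (u '' P p) + sInf (v '' P p)) (sSup (u '' P p) + sSup (v '' P p)) := by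
      rintro _ ⟨x, hx, rfl⟩
      constructor
      · exact add_le_add (csInf_le (huBdd p).2 (Set.mem_image_of_mem u hx))
          (csInf_le (hvBdd p).2 (Set.mem_image_of_mem v hx))
      · exact add_le_add (le_csSup (huBdd p).1 (Set.mem_image_of_mem u hx))
          (le_csSup (hvBdd p).1 (Set.mem_image_of_mem v hx))
    calc volume (w '' P p) ≤ _ := measure_mono hsub
      _ = ENNReal.ofReal ((sSup (u '' P p) - sInf (u '' P p)) +
            (sSup (v '' P p) - sInf (v '' P p))) := by rw [Real.volume_Icc]; ring_nf
      _ ≤ ENNReal.ofReal (sSup (u '' P p) - sInf (u '' P p)) +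
            ENNReal.ofReal (sSup (v '' P p) - sInf (v '' P p)) := ENNReal.ofReal_add_le
      _ = volume (Iu p) + volume (Iv p) := by rw [hIu, hIv, Real.volume_Ioo, Real.volume_Ioo]
  -- put everything together
  have hIusum : ∑' p, volume (Iu p) ≤ volume (u '' D) + ε / 2 := by
    rw [← measure_iUnion hIud (fun p => measurableSet_Ioo)]
    calc volume (⋃ p, Iu p) ≤ volume (⋃ n, T n) :=
          measure_mono (Set.iUnion_subset fun p => (hIuT p).trans (Set.subset_iUnion T p.1))
      _ ≤ ∑' n, volume (T n) := measure_iUnion_le T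
      _ ≤ _ := hTs
  have hIvsum : ∑' p, volume (Iv p) ≤ volume (v '' D) + ε / 2 := by
    rw [← measure_iUnion hIvd (fun p => measurableSet_Ioo)]
    calc volume (⋃ p, Iv p) ≤ volume (⋃ n, S n) :=
          measure_mono (Set.iUnion_subset fun p => (hIvS p).trans (Set.subset_iUnion S p.2))
      _ ≤ ∑' n, volume (S n) := measure_iUnion_le S
      _ ≤ _ := hSs
  calc volume (w '' D) ≤ volume (⋃ p, w '' P p) := measure_mono hcover
    _ ≤ ∑' p, volume (w '' P p) := measure_iUnion_le _
    _ ≤ ∑' p, (volume (Iu p) + volume (Iv p)) := ENNReal.tsum_le_tsum hpiece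
    _ = ∑' p, volume (Iu p) + ∑' p, volume (Iv p) := ENNReal.tsum_add
    _ ≤ (volume (u '' D) + ε / 2) + (volume (v '' D) + ε / 2) := add_le_add hIusum hIvsum
    _ = volume (u '' D) + volume (v '' D) + (ε / 2 + ε / 2) := by ring
    _ = volume (u '' D) + volume (v '' D) + ε := by rw [ENNReal.add_halves]

lemma monotoneOn_sum {ι : Type*} {D : Set ℝ} (s : Finset ι) (g : ι → ℝ → ℝ)
    (hg : ∀ k ∈ s, MonotoneOn (g k) D) :
    MonotoneOn (fun x => ∑ k ∈ s, g k x) D := by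
  intro x hx y hy hxy
  exact Finset.sum_le_sum fun k hk => hg k hk hx hy hxy

lemma lemmaA {ι : Type*} {D : Set ℝ} (s : Finset ι) (g : ι → ℝ → ℝ)
    (hg : ∀ k ∈ s, MonotoneOn (g k) D) :
    volume ((fun x => ∑ k ∈ s, g k x) '' D) ≤ ∑ k ∈ s, volume (g k '' D) := by
  classical
  induction s using Finset.cons_induction with
  | empty =>
    simp only [Finset.sum_empty]
    calc volume ((fun _ : ℝ => (0 : ℝ)) '' D) ≤ volume ({0} : Set ℝ) := by
          apply measure_mono; rintro _ ⟨x, _, rfl⟩; rfl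
      _ = 0 := Real.volume_singleton
  | cons a s ha ih =>
    simp only [Finset.sum_cons]
    calc volume ((fun x => g a x + ∑ k ∈ s, g k x) '' D)
        ≤ volume (g a '' D) + volume ((fun x => ∑ k ∈ s, g k x) '' D) :=
          lemmaB (hg a (Finset.mem_cons_self a s))
            (monotoneOn_sum s g fun k hk => hg k (Finset.mem_cons_of_mem hk))
      _ ≤ volume (g a '' D) + ∑ k ∈ s, volume (g k '' D) := by
          exact add_le_add le_rfl (ih fun k hk => hg k (Finset.mem_cons_of_mem hk))
      _ = _ := rfl

end Stmt7Aux

set_option maxHeartbeats 1000000 in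
/-- If `f₀, …, f_m` are strictly monotone functions on `D ⊆ ℝ` and
`G = {(f₀(x), …, f_m(x)) : x ∈ D} ⊆ ℝ^{m+1}` (Euclidean space), then
`H¹(G) ≤ Σₖ H¹(fₖ(D))`. -/
theorem stmt_7 (D : Set ℝ) (m : ℕ) (f : Fin (m + 1) → ℝ → ℝ)
    (hf : ∀ k, StrictMonoOn (f k) D ∨ StrictAntiOn (f k) D) :
    μH[1] ((fun x : ℝ => (WithLp.toLp 2 (fun k => f k x) : EuclideanSpace ℝ (Fin (m + 1)))) '' D) ≤
      ∑ k : Fin (m + 1), μH[1] (f k '' D) := by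
  classical
  set F : ℝ → EuclideanSpace ℝ (Fin (m + 1)) := fun x => WithLp.toLp 2 (fun k => f k x) with hF
  set g : Fin (m + 1) → ℝ → ℝ :=
    fun k => if StrictMonoOn (f k) D then f k else fun x => -f k x with hg
  have hgmono : ∀ k, StrictMonoOn (g k) D := by
    intro k
    rw [hg]
    by_cases h : StrictMonoOn (f k) D
    · simpa [h] using h
    · have := (hf k).resolve_left h
      simpa [h] using this.neg
  set h : ℝ → ℝ := fun x => ∑ k, g k x with hh
  have hhmono : StrictMonoOn h D := by
    intro x hx y hy hxy
    exact Finset.sum_lt_sum_of_nonempty Finset.univ_nonempty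
      fun k _ => hgmono k hx hy hxy
  -- the key pointwise estimate
  have habs : ∀ x ∈ D, ∀ y ∈ D, dist (F x) (F y) ≤ dist (h x) (h y) := by
    have main : ∀ x ∈ D, ∀ y ∈ D, x ≤ y → dist (F x) (F y) ≤ dist (h x) (h y) := by
      intro x hx y hy hxy
      have hgabs : ∀ k, |f k x - f k y| = g k y - g k x := by
        intro k
        have h1 : |f k x - f k y| = |g k x - g k y| := by
          rw [hg]
          by_cases hc : StrictMonoOn (f k) D
          · simp [hc]
          · simp only [hc, if_false]
            rw [show -f k x - -f k y = -(f k x - f k y) by ring, abs_neg]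
        rw [h1, abs_sub_comm, abs_of_nonneg (sub_nonneg.mpr ((hgmono k).monotoneOn hx hy hxy))]
      have hsum : ∑ k, |f k x - f k y| = h y - h x := by
        rw [hh]
        rw [Finset.sum_congr rfl fun k _ => hgabs k, Finset.sum_sub_distrib]
      have hd2 : dist (h x) (h y) = h y - h x := by
        rw [Real.dist_eq, abs_sub_comm,
          abs_of_nonneg (sub_nonneg.mpr (hhmono.monotoneOn hx hy hxy))]
      rw [hd2, ← hsum]
      have hnonneg : (0 : ℝ) ≤ ∑ k, |f k x - f k y| :=
        Finset.sum_nonneg fun k _ => abs_nonneg _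
      rw [EuclideanSpace.dist_eq, Real.sqrt_le_iff]
      refine ⟨hnonneg, ?_⟩
      calc ∑ i, dist (F x i) (F y i) ^ 2 = ∑ i, |f i x - f i y| ^ 2 := by simp [hF, Real.dist_eq]
        _ ≤ (∑ k, |f k x - f k y|) ^ 2 :=
          Finset.sum_sq_le_sq_sum_of_nonneg (fun k _ => abs_nonneg _)
    intro x hx y hy
    rcases le_total x y with hxy | hxy
    · exact main x hx y hy hxy
    · rw [dist_comm (F x), dist_comm (h x)]
      exact main y hy x hx hxy
  -- the Lipschitz map from h '' D onto F '' D
  set Φ : ℝ → EuclideanSpace ℝ (Fin (m + 1)) :=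
    fun t => if ht : t ∈ h '' D then F ht.choose else 0 with hΦ
  have hΦspec : ∀ t (ht : t ∈ h '' D), Φ t = F ht.choose := by
    intro t ht; exact dif_pos ht
  have hlip : LipschitzOnWith 1 Φ (h '' D) := by
    apply LipschitzOnWith.of_dist_le_mul
    intro a ha b hb
    rw [hΦspec a ha, hΦspec b hb]
    have hxa := ha.choose_spec
    have hxb := hb.choose_spec
    rw [NNReal.coe_one, one_mul]
    calc dist (F ha.choose) (F hb.choose) ≤ dist (h ha.choose) (h hb.choose) :=
          habs _ hxa.1 _ hxb.1
      _ = dist a b := by rw [hxa.2, hxb.2]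
  have hFsub : F '' D ⊆ Φ '' (h '' D) := by
    rintro _ ⟨x, hx, rfl⟩
    have hmem : h x ∈ h '' D := Set.mem_image_of_mem h hx
    refine ⟨h x, hmem, ?_⟩
    rw [hΦspec _ hmem]
    have hspec := hmem.choose_spec
    have : hmem.choose = x := hhmono.injOn hspec.1 hx hspec.2
    rw [this]
  -- chain of inequalities
  have s1 : μH[1] (F '' D) ≤ μH[1] (Φ '' (h '' D)) := measure_mono hFsub
  have s2 : μH[1] (Φ '' (h '' D)) ≤ (1 : ℝ≥0) ^ (1 : ℝ) * μH[1] (h '' D) :=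
    hlip.hausdorffMeasure_image_le zero_le_one
  have s3 : ((1 : ℝ≥0) : ℝ≥0∞) ^ (1 : ℝ) * μH[1] (h '' D) = μH[1] (h '' D) := by simp
  have s4 : (μH[1] : Measure ℝ) (h '' D) = volume (h '' D) := by
    rw [MeasureTheory.hausdorffMeasure_real]
  have s5 : volume (h '' D) ≤ ∑ k, volume (g k '' D) :=
    Stmt7Aux.lemmaA Finset.univ g fun k _ => (hgmono k).monotoneOn
  have s6 : ∑ k, volume (g k '' D) = ∑ k, (μH[1] : Measure ℝ) (f k '' D) := by
    rw [← MeasureTheory.hausdorffMeasure_real]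
    apply Finset.sum_congr rfl
    intro k _
    rw [hg]
    by_cases hc : StrictMonoOn (f k) D
    · simp [hc]
    · simp only [hc, if_false]
      have himg : (fun x => -f k x) '' D = -(f k '' D) := by
        rw [← Set.image_neg_eq_neg, Set.image_image]
      rw [himg]
      have : μH[(1 : ℝ)] (-(f k '' D)) = μH[(1 : ℝ)] (f k '' D) := by
        rw [MeasureTheory.hausdorffMeasure_real]
        exact Measure.measure_neg volume _
      rw [this]
  exact s1.trans (s2.trans ((s3.trans s4).le.trans (s5.trans s6.le)))
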